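/- Let λ > 0, 0 ≤ p ≤ 1 and let n ≥ 1 be an integer. Then ∫₀^∞ e^{-t} · ( ∑_{j=n-1}^∞ (e^{-λt} (λt)^j / j!) · p (1-p)^{j+1-n} ) dt = (λ/(λ+1))^{n-1} · p/(λp+1). (This is the probability that exactly n individuals survive the collapse in the Poisson growth with geometric catastrophe scheme.) -/

import Mathlib

open MeasureTheory Real

lemma integOn_pow_exp {r : ℝ} (hr : 0 < r) (j : ℕ) :
    IntegrableOn (fun t : ℝ => t ^ j * Real.exp (-(r * t))) (Set.Ioi 0) := by
  have h := integrableOn_rpow_mul_exp_neg_mul_rpow (s := (j : ℝ)) (p := 1)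
    (lt_of_lt_of_le neg_one_lt_zero (Nat.cast_nonneg j)) zero_lt_one hr
  refine h.congr_fun (fun x hx => ?_) measurableSet_Ioi
  simp [Real.rpow_natCast, Real.rpow_one, neg_mul]

lemma integral_pow_exp {r : ℝ} (hr : 0 < r) (j : ℕ) :
    ∫ t in Set.Ioi (0:ℝ), t ^ j * Real.exp (-(r * t))
      = (Nat.factorial j) / r ^ (j + 1) := by
  have h := Real.integral_rpow_mul_exp_neg_mul_Ioi (a := (j : ℝ) + 1) (by positivity) hr
  have h1 : ∫ t in Set.Ioi (0:ℝ), t ^ ((j : ℝ) + 1 - 1) * Real.exp (-(r * t))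
      = ∫ t in Set.Ioi (0:ℝ), t ^ j * Real.exp (-(r * t)) := by
    refine setIntegral_congr_fun measurableSet_Ioi (fun t ht => ?_)
    rw [add_sub_cancel_right, Real.rpow_natCast]
  rw [h1] at h
  rw [h]
  have h2 : ((j : ℝ) + 1) = ((j + 1 : ℕ) : ℝ) := by push_cast; ring
  rw [h2, Real.rpow_natCast]
  have h3 : Real.Gamma ((j + 1 : ℕ) : ℝ) = Nat.factorial j := by
    rw [show ((j + 1 : ℕ) : ℝ) = (j : ℝ) + 1 by push_cast; ring]
    exact_mod_cast Real.Gamma_nat_eq_factorial j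
  rw [h3, one_div, inv_pow]
  ring

theorem poisson_geometric_n_survivors (l p : ℝ) (hl : 0 < l) (hp0 : 0 ≤ p) (hp1 : p ≤ 1)
    (n : ℕ) (hn : 1 ≤ n) :
    ∫ t in Set.Ioi (0:ℝ), Real.exp (-t) *
      ∑' k : ℕ, (Real.exp (-(l * t)) * (l * t) ^ (k + (n - 1)) /
        (Nat.factorial (k + (n - 1)))) * p * (1 - p) ^ k
      = (l / (l + 1)) ^ (n - 1) * (p / (l * p + 1)) := by
  set m := n - 1 with hm
  set r := l + 1 with hr
  have hr0 : 0 < r := by positivity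
  set c : ℕ → ℝ := fun k => p * (1 - p) ^ k * l ^ (k + m) / Nat.factorial (k + m) with hc
  have hc0 : ∀ k, 0 ≤ c k := fun k => by
    have : 0 ≤ 1 - p := by linarith
    positivity
  set F : ℕ → ℝ → ℝ := fun k t => c k * (t ^ (k + m) * Real.exp (-(r * t))) with hF
  -- pointwise identity of integrands
  have hpt : ∀ t : ℝ, Real.exp (-t) *
      ∑' k : ℕ, (Real.exp (-(l * t)) * (l * t) ^ (k + m) /
        (Nat.factorial (k + m))) * p * (1 - p) ^ k = ∑' k : ℕ, F k t := by
    intro t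
    rw [← tsum_mul_left]
    refine tsum_congr (fun k => ?_)
    have he : Real.exp (-(r * t)) = Real.exp (-t) * Real.exp (-(l * t)) := by
      rw [← Real.exp_add]; congr 1; rw [hr]; ring
    rw [hF]
    simp only [hc]
    rw [he, mul_pow]
    have hfac : (Nat.factorial (k + m) : ℝ) ≠ 0 := by positivity
    field_simp
  have hFint : ∀ k, Integrable (F k) (volume.restrict (Set.Ioi (0:ℝ))) := fun k =>
    ((integOn_pow_exp hr0 (k + m)).const_mul (c k))
  have hFval : ∀ k, ∫ t in Set.Ioi (0:ℝ), F k t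
      = p * ((1 - p) * (l / r)) ^ k * ((l / r) ^ m / r) := by
    intro k
    rw [hF]
    simp only
    rw [integral_const_mul, integral_pow_exp hr0, hc]
    rw [mul_pow, div_pow, div_pow]
    field_simp
    ring
  have hq0 : 0 ≤ (1 - p) * (l / r) := by
    have : 0 ≤ 1 - p := by linarith
    positivity
  have hq1 : (1 - p) * (l / r) < 1 := by
    have h1 : (1 - p) * (l / r) ≤ l / r := by
      nlinarith [div_nonneg hl.le hr0.le]
    have h2 : l / r < 1 := by rw [div_lt_one hr0]; linarith
    linarith
  have hsum : Summable (fun k => p * ((1 - p) * (l / r)) ^ k * ((l / r) ^ m / r)) := by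
    apply Summable.mul_right
    apply Summable.mul_left
    exact summable_geometric_of_lt_one hq0 hq1
  have hnorm : Summable fun k => ∫ t in Set.Ioi (0:ℝ), ‖F k t‖ := by
    refine hsum.congr (fun k => ?_)
    rw [← hFval k]
    refine setIntegral_congr_fun measurableSet_Ioi (fun t ht => ?_)
    rw [Real.norm_eq_abs, abs_of_nonneg]
    have ht0 : (0:ℝ) ≤ t := le_of_lt ht
    have := hc0 k
    positivity
  have hswap := MeasureTheory.integral_tsum_of_summable_integral_norm hFint hnorm
  calc ∫ t in Set.Ioi (0:ℝ), Real.exp (-t) *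
      ∑' k : ℕ, (Real.exp (-(l * t)) * (l * t) ^ (k + m) /
        (Nat.factorial (k + m))) * p * (1 - p) ^ k
      = ∫ t in Set.Ioi (0:ℝ), ∑' k, F k t := by
        refine setIntegral_congr_fun measurableSet_Ioi (fun t _ => hpt t)
    _ = ∑' k, ∫ t in Set.Ioi (0:ℝ), F k t := hswap.symm
    _ = ∑' k, p * ((1 - p) * (l / r)) ^ k * ((l / r) ^ m / r) := tsum_congr hFval
    _ = (p * ((l / r) ^ m / r)) * ∑' k, ((1 - p) * (l / r)) ^ k := by
        rw [← tsum_mul_left]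
        refine tsum_congr (fun k => by ring)
    _ = (l / (l + 1)) ^ m * (p / (l * p + 1)) := by
        rw [tsum_geometric_of_lt_one hq0 hq1]
        have hden : 1 - (1 - p) * (l / r) = (l * p + 1) / r := by
          field_simp; ring
        rw [hden]
        have hlp : l * p + 1 ≠ 0 := by positivity
        field_simp
        ring
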